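/- For every probability distribution P_XY on 𝒳×𝒴, the upper conditional Rényi entropy converges to the conditional entropy as the order parameter tends to 0: lim_{θ→0} H↑_{1+θ}(X|Y) = H(X|Y). -/

import Mathlib

open Real Filter

/-- Marginal distribution on `𝒴`. -/
noncomputable def margY {𝒳 𝒴 : Type*} [Fintype 𝒳] (P : 𝒳 × 𝒴 → ℝ) (y : 𝒴) : ℝ :=
  ∑ x : 𝒳, P (x, y)

/-- Upper conditional Rényi entropy `H↑_{1+θ}(X|Y)`. -/
noncomputable def condRenyiUp {𝒳 𝒴 : Type*} [Fintype 𝒳] [Fintype 𝒴]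
    (P : 𝒳 × 𝒴 → ℝ) (θ : ℝ) : ℝ :=
  -((1 + θ) / θ) * Real.log (∑ y : 𝒴, (∑ x : 𝒳, P (x, y) ^ (1 + θ)) ^ (1 / (1 + θ)))

/-- Conditional entropy `H(X|Y)`. -/
noncomputable def condEnt {𝒳 𝒴 : Type*} [Fintype 𝒳] [Fintype 𝒴]
    (P : 𝒳 × 𝒴 → ℝ) : ℝ :=
  -∑ x : 𝒳, ∑ y : 𝒴,
    if 0 < P (x, y) then P (x, y) * Real.log (P (x, y) / margY P y) else 0

theorem upper_condRenyi_tendsto_condEnt {𝒳 𝒴 : Type*} [Fintype 𝒳] [Fintype 𝒴]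
    (P : 𝒳 × 𝒴 → ℝ) (hP0 : ∀ p, 0 ≤ P p) (hP1 : ∑ p : 𝒳 × 𝒴, P p = 1) :
    Tendsto (fun θ : ℝ => condRenyiUp P θ)
      (nhdsWithin 0 (Set.Ioo (-1 : ℝ) 0 ∪ Set.Ioi 0)) (nhds (condEnt P)) := by
  classical
  set S : Set ℝ := Set.Ioo (-1 : ℝ) 0 ∪ Set.Ioi 0 with hSdef
  have hm0 : ∀ y, 0 ≤ margY P y := fun y => Finset.sum_nonneg fun x _ => hP0 _
  set posY : Finset 𝒴 := Finset.univ.filter (fun y => 0 < margY P y) with hposY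
  set posX : 𝒴 → Finset 𝒳 := fun y => Finset.univ.filter (fun x => 0 < P (x, y))
    with hposX
  have hzero : ∀ y, margY P y = 0 → ∀ x, P (x, y) = 0 := by
    intro y hy x
    exact (Finset.sum_eq_zero_iff_of_nonneg (fun x _ => hP0 (x, y))).mp hy x
      (Finset.mem_univ x)
  have hmarg_eq : ∀ y, ∑ x ∈ posX y, P (x, y) = margY P y := by
    intro y
    refine Finset.sum_subset (Finset.filter_subset _ _) ?_
    intro x _ hx
    have hnx : ¬ 0 < P (x, y) := by simpa [hposX] using hx
    exact le_antisymm (not_lt.mp hnx) (hP0 _)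
  have hsum1 : ∑ y ∈ posY, margY P y = 1 := by
    have h2 : ∑ y : 𝒴, margY P y = 1 := by
      calc ∑ y : 𝒴, margY P y = ∑ y : 𝒴, ∑ x : 𝒳, P (x, y) := rfl
        _ = ∑ x : 𝒳, ∑ y : 𝒴, P (x, y) := by rw [Finset.sum_comm]
        _ = 1 := by rw [← Fintype.sum_prod_type]; exact hP1
    rw [← h2]
    refine Finset.sum_subset (Finset.filter_subset _ _) ?_
    intro y _ hy
    have hny : ¬ 0 < margY P y := by simpa [hposY] using hy
    exact le_antisymm (not_lt.mp hny) (hm0 y)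
  set Sf : 𝒴 → ℝ → ℝ := fun y θ => ∑ x ∈ posX y, P (x, y) ^ (1 + θ) with hSf
  have hSf0 : ∀ y, Sf y 0 = margY P y := by
    intro y
    rw [hSf, ← hmarg_eq y]
    refine Finset.sum_congr rfl fun x _ => ?_
    norm_num
  have h1θ : HasDerivAt (fun θ : ℝ => 1 + θ) 1 0 := by
    simpa using (hasDerivAt_id (0 : ℝ)).const_add 1
  set DS : 𝒴 → ℝ := fun y => ∑ x ∈ posX y, P (x, y) * Real.log (P (x, y)) with hDS
  have hSfder : ∀ y, HasDerivAt (Sf y) (DS y) 0 := by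
    intro y
    rw [hSf, hDS]
    apply HasDerivAt.fun_sum
    intro x hx
    have hx' : (0 : ℝ) < P (x, y) := by simpa [hposX] using hx
    have h := (hasDerivAt_const (0 : ℝ) (P (x, y))).rpow h1θ (by simpa using hx')
    simpa [Real.rpow_one] using h
  have hinv : HasDerivAt (fun θ : ℝ => 1 / (1 + θ)) (-1) 0 := by
    have h := h1θ.inv (by norm_num)
    simpa [one_div, Pi.inv_def] using h
  set D : ℝ := ∑ y ∈ posY, (DS y - margY P y * Real.log (margY P y)) with hDdef
  have hGder : HasDerivAt (fun θ : ℝ => ∑ y ∈ posY, (Sf y θ) ^ (1 / (1 + θ))) D 0 := by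
    rw [hDdef]
    apply HasDerivAt.fun_sum
    intro y hy
    have hy' : 0 < margY P y := by simpa [hposY] using hy
    have hS0 : Sf y 0 = margY P y := hSf0 y
    have hpos : 0 < Sf y 0 := hS0 ▸ hy'
    have h := (hSfder y).rpow hinv hpos
    refine h.congr_deriv ?_
    rw [hS0]
    norm_num [Real.rpow_one, Real.rpow_zero]
    ring
  have hG0 : ∑ y ∈ posY, (Sf y 0) ^ (1 / (1 + (0 : ℝ))) = 1 := by
    have hc : ∀ y ∈ posY, (Sf y 0) ^ (1 / (1 + (0 : ℝ))) = margY P y := by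
      intro y _
      rw [hSf0 y]
      norm_num
    rw [Finset.sum_congr rfl hc, hsum1]
  have hlogder : HasDerivAt (fun θ : ℝ =>
      Real.log (∑ y ∈ posY, (Sf y θ) ^ (1 / (1 + θ)))) D 0 := by
    have hne : (∑ y ∈ posY, Sf y 0 ^ (1 / (1 + (0 : ℝ)))) ≠ 0 := by
      rw [hG0]; norm_num
    have h := hGder.log hne
    simpa only [hG0, div_one] using h
  have hslope : Tendsto (slope (fun θ : ℝ =>
      Real.log (∑ y ∈ posY, (Sf y θ) ^ (1 / (1 + θ)))) 0)
      (nhdsWithin 0 {(0 : ℝ)}ᶜ) (nhds D) := hasDerivAt_iff_tendsto_slope.mp hlogder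
  have hsub : S ⊆ {(0 : ℝ)}ᶜ := by
    rintro θ (⟨_, h⟩ | h)
    · exact ne_of_lt h
    · exact ne_of_gt h
  have hmono := hslope.mono_left (nhdsWithin_mono 0 hsub)
  have hcoef : Tendsto (fun θ : ℝ => -(1 + θ)) (nhdsWithin 0 S) (nhds (-1)) := by
    have hc : Continuous fun θ : ℝ => -(1 + θ) := by continuity
    have := (hc.tendsto 0).mono_left (nhdsWithin_le_nhds (s := S))
    simpa using this
  have hmul := hcoef.mul hmono
  have hDval : condEnt P = -D := by
    rw [condEnt, hDdef]
    congr 1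
    rw [Finset.sum_comm]
    have hout : ∀ y ∈ (Finset.univ : Finset 𝒴), y ∉ posY →
        (∑ x : 𝒳, if 0 < P (x, y) then P (x, y) * Real.log (P (x, y) / margY P y)
          else 0) = 0 := by
      intro y _ hy
      have hny : ¬ 0 < margY P y := by simpa [hposY] using hy
      have hm : margY P y = 0 := le_antisymm (not_lt.mp hny) (hm0 y)
      refine Finset.sum_eq_zero fun x _ => ?_
      rw [hzero y hm x]
      simp
    rw [← Finset.sum_subset (Finset.filter_subset _ _) hout]
    refine Finset.sum_congr rfl fun y hy => ?_
    have hy' : 0 < margY P y := by simpa [hposY] using hy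
    have hfil : (∑ x : 𝒳, if 0 < P (x, y) then
        P (x, y) * Real.log (P (x, y) / margY P y) else 0)
        = ∑ x ∈ posX y, P (x, y) * Real.log (P (x, y) / margY P y) := by
      rw [hposX, Finset.sum_filter]
    rw [hfil, hDS]
    have hterm : ∀ x ∈ posX y, P (x, y) * Real.log (P (x, y) / margY P y)
        = P (x, y) * Real.log (P (x, y)) - P (x, y) * Real.log (margY P y) := by
      intro x hx
      have hx' : (0 : ℝ) < P (x, y) := by simpa [hposX] using hx
      rw [Real.log_div (ne_of_gt hx') (ne_of_gt hy'), mul_sub]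
    rw [Finset.sum_congr rfl hterm, Finset.sum_sub_distrib, ← Finset.sum_mul,
      hmarg_eq y]
  have hval : (-1 : ℝ) * D = condEnt P := by rw [hDval]; ring
  have hconv : Tendsto (fun θ : ℝ => -(1 + θ) * slope (fun t : ℝ =>
      Real.log (∑ y ∈ posY, (Sf y t) ^ (1 / (1 + t)))) 0 θ)
      (nhdsWithin 0 S) (nhds (condEnt P)) := by
    rw [← hval]; exact hmul
  refine Tendsto.congr' ?_ hconv
  filter_upwards [self_mem_nhdsWithin] with θ hθ
  have hθ1 : (0 : ℝ) < 1 + θ := by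
    rcases hθ with ⟨h1, _⟩ | h1
    · linarith
    · have : (0 : ℝ) < θ := h1
      linarith
  have hθ0 : θ ≠ 0 := by
    rcases hθ with ⟨_, h2⟩ | h2
    · exact ne_of_lt h2
    · exact ne_of_gt h2
  have hx : ∀ y, ∑ x : 𝒳, P (x, y) ^ (1 + θ) = Sf y θ := by
    intro y
    rw [hSf]
    refine (Finset.sum_subset (Finset.filter_subset _ _) ?_).symm
    intro x _ hxn
    have hnx : ¬ 0 < P (x, y) := by simpa [hposX] using hxn
    rw [le_antisymm (not_lt.mp hnx) (hP0 _), Real.zero_rpow (ne_of_gt hθ1)]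
  have hy : ∑ y : 𝒴, (∑ x : 𝒳, P (x, y) ^ (1 + θ)) ^ (1 / (1 + θ))
      = ∑ y ∈ posY, (Sf y θ) ^ (1 / (1 + θ)) := by
    rw [Finset.sum_congr rfl (fun y _ => by rw [hx y])]
    refine (Finset.sum_subset (Finset.filter_subset _ _) ?_).symm
    intro y _ hyn
    have hny : ¬ 0 < margY P y := by simpa [hposY] using hyn
    have hm : margY P y = 0 := le_antisymm (not_lt.mp hny) (hm0 y)
    have hSz : Sf y θ = 0 := by
      rw [hSf]
      refine Finset.sum_eq_zero fun x _ => ?_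
      rw [hzero y hm x, Real.zero_rpow (ne_of_gt hθ1)]
    rw [hSz, Real.zero_rpow (one_div_ne_zero (ne_of_gt hθ1))]
  rw [condRenyiUp, hy, slope_def_field]
  have hf0 : Real.log (∑ y ∈ posY, (Sf y 0) ^ (1 / (1 + (0 : ℝ)))) = 0 := by
    rw [hG0, Real.log_one]
  rw [hf0, sub_zero, sub_zero]
  ring
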